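/- arXiv:1408.4768 — 2 statements merged into one kernel-verified Lean document; each statement's English description precedes it below -/
import Mathlib

section
/- Let λ > 0, a > 0, c > 0 and let q : [0,∞) → (0,∞) be differentiable such that e^{λt}q(t) is non-increasing with limit C > 0, and (d/dt)(ln q(t) + λt) ≥ -c e^{-at} for all t ≥ 0. Then for all t ≥ 0, C ≤ e^{λt} q(t) ≤ C exp((c/a) e^{-at}); consequently q(t) = C e^{-λt}(1 + O(e^{-at})) as t → ∞. -/
open Real Filter Set Asymptotics

theorem exp_tail_approx (lam a c C : ℝ) (hlam : 0 < lam) (ha : 0 < a) (hc : 0 < c)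
    (hC : 0 < C) (q : ℝ → ℝ) (hpos : ∀ t : ℝ, 0 ≤ t → 0 < q t)
    (hdiff : ∀ t : ℝ, 0 ≤ t → DifferentiableAt ℝ q t)
    (hmono : AntitoneOn (fun t => Real.exp (lam * t) * q t) (Set.Ici 0))
    (hlim : Tendsto (fun t => Real.exp (lam * t) * q t) atTop (nhds C))
    (hineq : ∀ t : ℝ, 0 ≤ t →
      deriv (fun s => Real.log (q s) + lam * s) t ≥ -c * Real.exp (-a * t)) :
    (∀ t : ℝ, 0 ≤ t → C ≤ Real.exp (lam * t) * q t ∧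
      Real.exp (lam * t) * q t ≤ C * Real.exp (c / a * Real.exp (-a * t))) ∧
    (fun t => q t - C * Real.exp (-lam * t)) =O[atTop]
      (fun t => Real.exp (-lam * t) * Real.exp (-a * t)) := by
  set f : ℝ → ℝ := fun s => Real.log (q s) + lam * s with hf
  set g : ℝ → ℝ := fun s => c / a * Real.exp (-a * s) with hg
  set h : ℝ → ℝ := fun s => f s - g s with hh
  have hgd : ∀ t : ℝ, HasDerivAt g (-c * Real.exp (-a * t)) t := by
    intro t
    have h1 : HasDerivAt (fun s : ℝ => -a * s) (-a) t := by
      simpa using (hasDerivAt_id t).const_mul (-a)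
    have h2 := (h1.exp).const_mul (c / a)
    refine h2.congr_deriv ?_
    field_simp
  have hfd : ∀ t : ℝ, 0 ≤ t → DifferentiableAt ℝ f t := by
    intro t ht
    exact (((hdiff t ht).log (hpos t ht).ne')).add ((differentiable_id.const_mul lam) t)
  have hhd : ∀ t : ℝ, 0 ≤ t → DifferentiableAt ℝ h t := by
    intro t ht
    exact (hfd t ht).sub (hgd t).differentiableAt
  have hhderiv : ∀ t : ℝ, 0 ≤ t → 0 ≤ deriv h t := by
    intro t ht
    have : deriv h t = deriv f t - deriv g t :=
      deriv_sub (hfd t ht) (hgd t).differentiableAt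
    rw [this, (hgd t).deriv]
    have := hineq t ht
    linarith
  have hcont : ContinuousOn h (Set.Ici 0) := fun t ht =>
    (hhd t ht).continuousAt.continuousWithinAt
  have hhm : MonotoneOn h (Set.Ici 0) := by
    apply monotoneOn_of_deriv_nonneg (convex_Ici 0) hcont
    · intro t ht
      rw [interior_Ici] at ht
      exact (hhd t (le_of_lt ht)).differentiableWithinAt
    · intro t ht
      rw [interior_Ici] at ht
      exact hhderiv t (le_of_lt ht)
  -- limit of h
  have hglim : Tendsto g atTop (nhds 0) := by
    have h0 : Tendsto (fun s : ℝ => a * s) atTop atTop :=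
      Tendsto.const_mul_atTop ha tendsto_id
    have : Tendsto (fun s : ℝ => Real.exp (-(a * s))) atTop (nhds 0) :=
      Real.tendsto_exp_neg_atTop_nhds_zero.comp h0
    have h2 := this.const_mul (c / a)
    rw [mul_zero] at h2
    refine h2.congr fun s => by simp [hg, neg_mul]
  have hflim : Tendsto f atTop (nhds (Real.log C)) := by
    have hlog : Tendsto (fun t => Real.log (Real.exp (lam * t) * q t)) atTop
        (nhds (Real.log C)) := ((Real.continuousAt_log hC.ne').tendsto).comp hlim
    apply hlog.congr'
    filter_upwards [eventually_ge_atTop (0 : ℝ)] with t ht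
    rw [Real.log_mul (Real.exp_pos _).ne' (hpos t ht).ne', Real.log_exp, hf]
    ring
  have hhlim : Tendsto h atTop (nhds (Real.log C)) := by
    simpa using hflim.sub hglim
  -- key upper bound in log form
  have hkey : ∀ t : ℝ, 0 ≤ t → h t ≤ Real.log C := by
    intro t ht
    refine ge_of_tendsto hhlim ?_
    filter_upwards [eventually_ge_atTop t, eventually_ge_atTop (0 : ℝ)] with s hs hs0
    exact hhm ht hs0 hs
  have hlower : ∀ t : ℝ, 0 ≤ t → C ≤ Real.exp (lam * t) * q t := by
    intro t ht
    refine le_of_tendsto hlim ?_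
    filter_upwards [eventually_ge_atTop t] with s hs
    exact hmono ht (le_trans ht hs) hs
  have hupper : ∀ t : ℝ, 0 ≤ t →
      Real.exp (lam * t) * q t ≤ C * Real.exp (c / a * Real.exp (-a * t)) := by
    intro t ht
    have h1 : Real.exp (lam * t) * q t = Real.exp (f t) := by
      rw [hf, Real.exp_add, Real.exp_log (hpos t ht)]; ring
    have h2 : C * Real.exp (c / a * Real.exp (-a * t)) =
        Real.exp (Real.log C + g t) := by
      rw [Real.exp_add, Real.exp_log hC]
    rw [h1, h2]
    apply Real.exp_le_exp.mpr
    have h3 : f t - g t ≤ Real.log C := hkey t ht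
    linarith
  refine ⟨fun t ht => ⟨hlower t ht, hupper t ht⟩, ?_⟩
  apply Asymptotics.IsBigO.of_bound (C * (c / a) * Real.exp (c / a))
  filter_upwards [eventually_ge_atTop (0 : ℝ)] with t ht
  have hel := Real.exp_pos (-lam * t)
  have hea := Real.exp_pos (-a * t)
  have hx0 : 0 ≤ c / a * Real.exp (-a * t) := by positivity
  have hx1 : c / a * Real.exp (-a * t) ≤ c / a := by
    have : Real.exp (-a * t) ≤ 1 := Real.exp_le_one_iff.mpr (by nlinarith)
    nlinarith [div_pos hc ha]
  set x := c / a * Real.exp (-a * t) with hxdef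
  have hexp1 : Real.exp x - 1 ≤ x * Real.exp x := by
    have h1 := Real.add_one_le_exp (-x)
    have h2 : Real.exp (-x) * Real.exp x = 1 := by
      rw [← Real.exp_add]; simp
    nlinarith [Real.exp_pos x]
  have hexp2 : Real.exp x ≤ Real.exp (c / a) := Real.exp_le_exp.mpr hx1
  have hme : Real.exp (-lam * t) * Real.exp (lam * t) = 1 := by
    rw [← Real.exp_add]; simp
  have h4 : Real.exp (-lam * t) * (Real.exp (lam * t) * q t) = q t := by
    rw [← mul_assoc, hme, one_mul]
  have hqlo : C * Real.exp (-lam * t) ≤ q t := by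
    nlinarith [mul_le_mul_of_nonneg_left (hlower t ht) hel.le]
  have hqhi : q t - C * Real.exp (-lam * t) ≤
      C * (c / a) * Real.exp (c / a) * (Real.exp (-lam * t) * Real.exp (-a * t)) := by
    have hup := hupper t ht
    have hbound : Real.exp (lam * t) * q t - C ≤ C * (x * Real.exp (c / a)) := by
      have : Real.exp (lam * t) * q t - C ≤ C * (Real.exp x - 1) := by nlinarith
      have h3 : Real.exp x - 1 ≤ x * Real.exp (c / a) := by
        nlinarith [Real.exp_pos x]
      nlinarith
    calc q t - C * Real.exp (-lam * t)
        = Real.exp (-lam * t) * (Real.exp (lam * t) * q t - C) := by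
          linear_combination (-(q t)) * hme
      _ ≤ Real.exp (-lam * t) * (C * (x * Real.exp (c / a))) := by
          apply mul_le_mul_of_nonneg_left hbound (le_of_lt hel)
      _ = C * (c / a) * Real.exp (c / a) * (Real.exp (-lam * t) * Real.exp (-a * t)) := by
          rw [hxdef]; ring
  have habs1 : ‖q t - C * Real.exp (-lam * t)‖ = q t - C * Real.exp (-lam * t) := by
    rw [Real.norm_eq_abs, abs_of_nonneg (by linarith)]
  have habs2 : ‖Real.exp (-lam * t) * Real.exp (-a * t)‖ =
      Real.exp (-lam * t) * Real.exp (-a * t) := by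
    rw [Real.norm_eq_abs, abs_of_nonneg (by positivity)]
  rw [habs1, habs2]
  exact hqhi
end

section
/- Let C ∈ (0,1], λ > 0, a > 0, w ∈ ℝ. For each n let (z_k^{(n)})_{k≥1} be natural numbers with S_n := Σ_k k z_k^{(n)} → ∞ and Σ_k k² z_k^{(n)} = o(S_n^{1+a/λ}). Set t_n = λ^{-1}(ln(C S_n) + w). Suppose q_k : [0,∞) → [0,1) satisfies q_k(t) ≤ k e^{-λt} and q_k(t) = C k e^{-λt}(1 + r_k(t)) with |r_k(t)| ≤ M k e^{-at} for all k ≥ 1, t ≥ 0. Then Σ_{k≥1} z_k^{(n)} ln(1 - q_k(t_n)) → -e^{-w} as n → ∞. -/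
open Real Filter

/-- Lower bound for `log (1 - x)` when `0 ≤ x ≤ 1/2`. -/
lemma log_one_sub_ge (x : ℝ) (hx0 : 0 ≤ x) (hx2 : x ≤ 1/2) :
    -x - 2 * x ^ 2 ≤ Real.log (1 - x) := by
  have hc : 0 < 1 - x := by linarith
  have h1 : 1 - (1 - x)⁻¹ ≤ Real.log (1 - x) := Real.one_sub_inv_le_log_of_pos hc
  have h3 : 1 ≤ (1 + x + 2 * x ^ 2) * (1 - x) := by nlinarith [sq_nonneg x]
  have h2 : (1 - x)⁻¹ ≤ 1 + x + 2 * x ^ 2 := by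
    rw [← one_div, div_le_iff₀ hc]
    linarith
  linarith

/-- Upper bound for `log (1 - x)` when `0 ≤ x < 1`. -/
lemma log_one_sub_le (x : ℝ) (hx1 : x < 1) :
    Real.log (1 - x) ≤ -x := by
  have := Real.log_le_sub_one_of_pos (show 0 < 1 - x by linarith)
  linarith

set_option maxHeartbeats 1000000 in
theorem gumbel_core (C lam a w M : ℝ) (hC0 : 0 < C) (hC1 : C ≤ 1) (hlam : 0 < lam)
    (ha : 0 < a) (z : ℕ → ℕ → ℕ) (hz0 : ∀ n, z n 0 = 0)
    (hzsum : ∀ n, Summable (fun k : ℕ => (k : ℝ) ^ 2 * z n k))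
    (S : ℕ → ℝ) (hS : ∀ n, S n = ∑' k : ℕ, (k : ℝ) * z n k)
    (hStop : Tendsto S atTop atTop)
    (hmom : (fun n => ∑' k : ℕ, (k : ℝ) ^ 2 * z n k) =o[atTop]
      (fun n => S n ^ (1 + a / lam)))
    (t : ℕ → ℝ) (ht : ∀ n, t n = (Real.log (C * S n) + w) / lam)
    (q : ℕ → ℝ → ℝ)
    (hq01 : ∀ k : ℕ, 1 ≤ k → ∀ s : ℝ, 0 ≤ s → 0 ≤ q k s ∧ q k s < 1)
    (hqle : ∀ k : ℕ, 1 ≤ k → ∀ s : ℝ, 0 ≤ s → q k s ≤ k * Real.exp (-lam * s))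
    (hqasym : ∀ k : ℕ, 1 ≤ k → ∀ s : ℝ, 0 ≤ s →
      |q k s - C * k * Real.exp (-lam * s)| ≤
        C * k * Real.exp (-lam * s) * (M * k * Real.exp (-a * s))) :
    Tendsto (fun n => ∑' k : ℕ, (z n k : ℝ) * Real.log (1 - q k (t n))) atTop
      (nhds (-Real.exp (-w))) := by
  rcases le_or_gt a lam with hal | hal
  · -- Main case : a ≤ lam.
    have hρ0 : Tendsto (fun n => (∑' k : ℕ, (k : ℝ) ^ 2 * z n k) / S n ^ (1 + a / lam))
        atTop (nhds 0) := hmom.tendsto_div_nhds_zero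
    set K1 : ℝ := M * Real.exp (-w) * Real.exp (-(a * w / lam)) * C ^ (-(a / lam)) with hK1
    set K2 : ℝ := Real.exp (-w) ^ 2 / C ^ 2 with hK2
    set K : ℝ := K1 + 2 * K2 with hK
    have hK2nn : 0 ≤ K2 := by positivity
    -- eventual facts
    have hCS : Tendsto (fun n => C * S n) atTop atTop := hStop.const_mul_atTop hC0
    have hlog : Tendsto (fun n => Real.log (C * S n)) atTop atTop :=
      Real.tendsto_log_atTop.comp hCS
    have E1 : ∀ᶠ n in atTop, 1 ≤ S n := hStop.eventually_ge_atTop 1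
    have E2 : ∀ᶠ n in atTop, -w ≤ Real.log (C * S n) := hlog.eventually_ge_atTop (-w)
    have E3 : ∀ᶠ n in atTop,
        (∑' k : ℕ, (k : ℝ) ^ 2 * z n k) / S n ^ (1 + a / lam) < (C * Real.exp w / 2) ^ 2 :=
      hρ0.eventually_lt_const (by positivity)
    have key : ∀ᶠ n in atTop,
        ‖(∑' k : ℕ, (z n k : ℝ) * Real.log (1 - q k (t n))) - (-Real.exp (-w))‖ ≤
          K * ((∑' k : ℕ, (k : ℝ) ^ 2 * z n k) / S n ^ (1 + a / lam)) := by
      filter_upwards [E1, E2, E3] with n hS1 hw hδ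
      set Qn : ℝ := ∑' k : ℕ, (k : ℝ) ^ 2 * z n k with hQn
      have hSpos : 0 < S n := lt_of_lt_of_le one_pos hS1
      have hCSpos : 0 < C * S n := mul_pos hC0 hSpos
      have ht0 : 0 ≤ t n := by
        rw [ht n]; apply div_nonneg _ hlam.le; linarith
      have hlamt : lam * t n = Real.log (C * S n) + w := by
        rw [ht n]; field_simp
      have hu : Real.exp (-lam * t n) = Real.exp (-w) / (C * S n) := by
        rw [neg_mul, hlamt, neg_add, Real.exp_add, Real.exp_neg, Real.exp_log hCSpos,
          inv_mul_eq_div]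
      have hv : Real.exp (-a * t n) =
          Real.exp (-(a * w / lam)) * (C * S n) ^ (-(a / lam)) := by
        rw [Real.rpow_def_of_pos hCSpos, ← Real.exp_add]
        congr 1
        rw [ht n]; field_simp; ring
      have hSpow : 0 < S n ^ (1 + a / lam) := Real.rpow_pos_of_pos hSpos _
      have hQnn : (0:ℝ) ≤ Qn := tsum_nonneg fun k => by positivity
      have hρnn : (0:ℝ) ≤ Qn / S n ^ (1 + a / lam) := div_nonneg hQnn hSpow.le
      -- finite support
      obtain ⟨N, hN⟩ : ∃ N, ∀ k, N ≤ k → z n k = 0 := by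
        have h1 : Tendsto (fun k : ℕ => (k : ℝ) ^ 2 * (z n k : ℝ)) atTop (nhds 0) :=
          (hzsum n).tendsto_atTop_zero
        have h2 : ∀ᶠ k : ℕ in atTop, (k : ℝ) ^ 2 * z n k < 1 ∧ 1 ≤ k :=
          (h1.eventually_lt_const one_pos).and (eventually_ge_atTop 1)
        obtain ⟨N, hN⟩ := eventually_atTop.mp h2
        refine ⟨N, fun k hk => ?_⟩
        obtain ⟨hlt, hk1⟩ := hN k hk
        by_contra hzk
        have h3 : (1:ℝ) ≤ z n k := by exact_mod_cast Nat.one_le_iff_ne_zero.mpr hzk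
        have h4 : (1:ℝ) ≤ (k:ℝ) := by exact_mod_cast hk1
        nlinarith
      have hsummz : ∀ f : ℕ → ℝ, Summable (fun k => (z n k : ℝ) * f k) := by
        intro f
        apply summable_of_ne_finset_zero (s := Finset.range N)
        intro k hk
        rw [hN k (Nat.le_of_not_lt (by simpa using hk)), Nat.cast_zero, zero_mul]
      have hkpos : ∀ k : ℕ, z n k ≠ 0 → 1 ≤ k := by
        intro k hzk
        rcases Nat.eq_zero_or_pos k with h | h
        · exact absurd (h ▸ hz0 n) hzk
        · exact h
      -- every active k has q ≤ 1/2
      have hq_half : ∀ k : ℕ, z n k ≠ 0 → q k (t n) ≤ 1/2 := by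
        intro k hzk
        have hk1 := hkpos k hzk
        have hzk1 : (1:ℝ) ≤ z n k := by exact_mod_cast Nat.one_le_iff_ne_zero.mpr hzk
        have hk2 : (k:ℝ) ^ 2 ≤ Qn := by
          calc (k:ℝ) ^ 2 = (k:ℝ) ^ 2 * 1 := by ring
          _ ≤ (k:ℝ) ^ 2 * z n k := by nlinarith [sq_nonneg (k:ℝ)]
          _ ≤ Qn := Summable.le_tsum (hzsum n) k fun j _ => by positivity
        have hQle : Qn ≤ (C * Real.exp w / 2 * S n) ^ 2 := by
          have h1 : Qn ≤ (C * Real.exp w / 2) ^ 2 * S n ^ (1 + a / lam) :=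
            le_of_lt ((div_lt_iff₀ hSpow).mp hδ)
          have h2 : S n ^ (1 + a / lam) ≤ S n ^ (2:ℝ) :=
            Real.rpow_le_rpow_of_exponent_le hS1
              (by have := (div_le_one hlam).mpr hal; linarith)
          have h3 : S n ^ (2:ℝ) = S n ^ 2 := by
            rw [show (2:ℝ) = ((2:ℕ):ℝ) by norm_num, Real.rpow_natCast]
          calc Qn ≤ (C * Real.exp w / 2) ^ 2 * S n ^ (1 + a / lam) := h1
          _ ≤ (C * Real.exp w / 2) ^ 2 * S n ^ (2:ℝ) := by
              apply mul_le_mul_of_nonneg_left h2 (by positivity)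
          _ = (C * Real.exp w / 2 * S n) ^ 2 := by rw [h3]; ring
        have hkS : (k:ℝ) ≤ C * Real.exp w / 2 * S n := by
          have h0 : (0:ℝ) ≤ C * Real.exp w / 2 * S n := by positivity
          nlinarith [hk2.trans hQle, Nat.cast_nonneg (α := ℝ) k]
        calc q k (t n) ≤ k * Real.exp (-lam * t n) := hqle k hk1 _ ht0
        _ ≤ (C * Real.exp w / 2 * S n) * (Real.exp (-w) / (C * S n)) := by
            rw [hu]; exact mul_le_mul_of_nonneg_right hkS (by positivity)
        _ = 1/2 := by
            rw [Real.exp_neg]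
            field_simp
      -- upper bound
      have hub : (∑' k, (z n k : ℝ) * Real.log (1 - q k (t n))) ≤
          -(∑' k, (z n k : ℝ) * q k (t n)) := by
        rw [← tsum_neg]
        refine Summable.tsum_le_tsum ?_ (hsummz _) ((hsummz fun k => q k (t n)).neg)
        intro k
        rcases eq_or_ne (z n k) 0 with hzk | hzk
        · simp [hzk]
        · have hk1 := hkpos k hzk
          obtain ⟨hq0, hq1⟩ := hq01 k hk1 _ ht0
          have hlog := log_one_sub_le (q k (t n)) hq1
          calc (z n k : ℝ) * Real.log (1 - q k (t n)) ≤ (z n k : ℝ) * (-q k (t n)) :=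
            mul_le_mul_of_nonneg_left hlog (Nat.cast_nonneg _)
          _ = -((z n k : ℝ) * q k (t n)) := by ring
      -- lower bound
      have hlb : -(∑' k, (z n k : ℝ) * q k (t n)) -
          2 * (∑' k, (z n k : ℝ) * (q k (t n)) ^ 2) ≤
          ∑' k, (z n k : ℝ) * Real.log (1 - q k (t n)) := by
        have hrw : -(∑' k, (z n k : ℝ) * q k (t n)) -
            2 * (∑' k, (z n k : ℝ) * (q k (t n)) ^ 2) =
            ∑' k, (-((z n k : ℝ) * q k (t n)) - 2 * ((z n k : ℝ) * (q k (t n)) ^ 2)) := by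
          rw [Summable.tsum_sub ((hsummz fun k => q k (t n)).neg)
            ((hsummz fun k => (q k (t n)) ^ 2).mul_left 2), tsum_neg, tsum_mul_left]
        rw [hrw]
        refine Summable.tsum_le_tsum ?_
          (((hsummz fun k => q k (t n)).neg).sub
            ((hsummz fun k => (q k (t n)) ^ 2).mul_left 2)) (hsummz _)
        intro k
        rcases eq_or_ne (z n k) 0 with hzk | hzk
        · simp [hzk]
        · have hk1 := hkpos k hzk
          obtain ⟨hq0, _⟩ := hq01 k hk1 _ ht0
          have hhalf := hq_half k hzk
          have hlog := log_one_sub_ge (q k (t n)) hq0 hhalf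
          calc -((z n k : ℝ) * q k (t n)) - 2 * ((z n k : ℝ) * (q k (t n)) ^ 2)
              = (z n k : ℝ) * (-(q k (t n)) - 2 * (q k (t n)) ^ 2) := by ring
          _ ≤ (z n k : ℝ) * Real.log (1 - q k (t n)) :=
            mul_le_mul_of_nonneg_left hlog (Nat.cast_nonneg _)
      -- G close to exp(-w)
      have hGbound : |(∑' k, (z n k : ℝ) * q k (t n)) - Real.exp (-w)| ≤
          K1 * (Qn / S n ^ (1 + a / lam)) := by
        have hCeS : (∑' k, (z n k : ℝ) * (C * k * Real.exp (-lam * t n))) =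
            Real.exp (-w) := by
          have h1 : (fun k : ℕ => (z n k : ℝ) * (C * k * Real.exp (-lam * t n))) =
              fun k : ℕ => (C * Real.exp (-lam * t n)) * ((k : ℝ) * z n k) := by
            funext k; ring
          rw [h1, tsum_mul_left, ← hS n, hu]
          field_simp
        have hsub : (∑' k, (z n k : ℝ) * q k (t n)) - Real.exp (-w) =
            ∑' k, (z n k : ℝ) * (q k (t n) - C * k * Real.exp (-lam * t n)) := by
          rw [← hCeS, ← Summable.tsum_sub (hsummz fun k => q k (t n))
            (hsummz fun k => C * k * Real.exp (-lam * t n))]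
          congr 1; funext k; ring
        rw [hsub]
        have hsumabs : Summable (fun k =>
            ‖(z n k : ℝ) * (q k (t n) - C * k * Real.exp (-lam * t n))‖) := by
          apply summable_of_ne_finset_zero (s := Finset.range N)
          intro k hk
          rw [hN k (Nat.le_of_not_lt (by simpa using hk))]
          simp
        have habs1 : |∑' k, (z n k : ℝ) * (q k (t n) - C * k * Real.exp (-lam * t n))| ≤
            ∑' k, ‖(z n k : ℝ) * (q k (t n) - C * k * Real.exp (-lam * t n))‖ := by
          rw [← Real.norm_eq_abs]
          exact norm_tsum_le_tsum_norm hsumabs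
        have habs2 : (∑' k, ‖(z n k : ℝ) * (q k (t n) - C * k * Real.exp (-lam * t n))‖) ≤
            ∑' k, (z n k : ℝ) *
              (C * k * Real.exp (-lam * t n) * (M * k * Real.exp (-a * t n))) := by
          refine Summable.tsum_le_tsum ?_ hsumabs (hsummz _)
          intro k
          rcases eq_or_ne (z n k) 0 with hzk | hzk
          · simp [hzk]
          · have hk1 := hkpos k hzk
            rw [Real.norm_eq_abs, abs_mul, Nat.abs_cast]
            exact mul_le_mul_of_nonneg_left (hqasym k hk1 _ ht0) (Nat.cast_nonneg _)
        have heq2 : (∑' k, (z n k : ℝ) *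
            (C * k * Real.exp (-lam * t n) * (M * k * Real.exp (-a * t n)))) =
            (C * M * Real.exp (-lam * t n) * Real.exp (-a * t n)) * Qn := by
          have h1 : (fun k : ℕ => (z n k : ℝ) *
              (C * k * Real.exp (-lam * t n) * (M * k * Real.exp (-a * t n)))) =
              fun k : ℕ => (C * M * Real.exp (-lam * t n) * Real.exp (-a * t n)) *
                ((k : ℝ) ^ 2 * z n k) := by
            funext k; ring
          rw [h1, tsum_mul_left]
        refine le_trans (le_trans habs1 habs2) (le_of_eq ?_)
        rw [heq2, hu, hv, Real.mul_rpow hC0.le hSpos.le, Real.rpow_neg hSpos.le,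
          Real.rpow_add hSpos, Real.rpow_one, hK1]
        have hSp1 : S n ^ (a / lam) ≠ 0 := (Real.rpow_pos_of_pos hSpos _).ne'
        field_simp
      -- H bound
      have hHbound : (∑' k, (z n k : ℝ) * (q k (t n)) ^ 2) ≤
          K2 * (Qn / S n ^ (1 + a / lam)) := by
        have h1 : (∑' k, (z n k : ℝ) * (q k (t n)) ^ 2) ≤
            ∑' k, (z n k : ℝ) * ((k : ℝ) * Real.exp (-lam * t n)) ^ 2 := by
          refine Summable.tsum_le_tsum ?_ (hsummz _) (hsummz _)
          intro k
          rcases eq_or_ne (z n k) 0 with hzk | hzk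
          · simp [hzk]
          · have hk1 := hkpos k hzk
            obtain ⟨hq0, _⟩ := hq01 k hk1 _ ht0
            have := pow_le_pow_left₀ hq0 (hqle k hk1 _ ht0) 2
            exact mul_le_mul_of_nonneg_left this (Nat.cast_nonneg _)
        have h2 : (∑' k, (z n k : ℝ) * ((k : ℝ) * Real.exp (-lam * t n)) ^ 2) =
            Real.exp (-lam * t n) ^ 2 * Qn := by
          have h3 : (fun k : ℕ => (z n k : ℝ) * ((k : ℝ) * Real.exp (-lam * t n)) ^ 2) =
              fun k : ℕ => Real.exp (-lam * t n) ^ 2 * ((k : ℝ) ^ 2 * z n k) := by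
            funext k; ring
          rw [h3, tsum_mul_left]
        have hS2 : S n ^ (1 + a / lam) ≤ S n ^ 2 := by
          have h4 : S n ^ (1 + a / lam) ≤ S n ^ (2:ℝ) :=
            Real.rpow_le_rpow_of_exponent_le hS1 (by linarith [(div_le_one hlam).mpr hal])
          rwa [show (2:ℝ) = ((2:ℕ):ℝ) by norm_num, Real.rpow_natCast] at h4
        calc (∑' k, (z n k : ℝ) * (q k (t n)) ^ 2)
            ≤ Real.exp (-lam * t n) ^ 2 * Qn := h1.trans_eq h2
        _ = (Real.exp (-w) ^ 2 / C ^ 2) * (Qn / S n ^ 2) := by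
            rw [hu]
            have hc : C ≠ 0 := hC0.ne'
            have hsne : S n ≠ 0 := hSpos.ne'
            field_simp
        _ ≤ K2 * (Qn / S n ^ (1 + a / lam)) := by
            rw [hK2]
            apply mul_le_mul_of_nonneg_left _ (by positivity)
            exact div_le_div_of_nonneg_left hQnn hSpow hS2
      -- assemble
      have hH0 : (0:ℝ) ≤ ∑' k, (z n k : ℝ) * (q k (t n)) ^ 2 :=
        tsum_nonneg fun k => by positivity
      have hGabs := abs_le.mp hGbound
      rw [Real.norm_eq_abs, sub_neg_eq_add, abs_le]
      constructor
      · rw [hK]; nlinarith [hGabs.1, hGabs.2, hHbound, hlb, hρnn]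
      · rw [hK]; nlinarith [hGabs.1, hGabs.2, hHbound, hub, hρnn, hK2nn]
    have hKρ : Tendsto (fun n =>
        K * ((∑' k : ℕ, (k : ℝ) ^ 2 * z n k) / S n ^ (1 + a / lam))) atTop (nhds 0) := by
      simpa using hρ0.const_mul K
    exact tendsto_sub_nhds_zero_iff.mp (squeeze_zero_norm' key hKρ)
  · -- case lam < a : hypotheses are contradictory
    exfalso
    have hM : 0 ≤ M := by
      have h := hqasym 1 le_rfl 0 le_rfl
      have h0 := le_trans (abs_nonneg _) h
      simp [Real.exp_zero] at h0
      nlinarith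
    set B : ℝ := (2 / C) * (1 + 2 * M) ^ (lam / a) with hB
    have h12M : (0:ℝ) < 1 + 2 * M := by linarith
    have hBpos : 0 < B := by
      apply mul_pos (by positivity) (Real.rpow_pos_of_pos h12M _)
    obtain ⟨k, hk⟩ := exists_nat_ge (max 1 (B ^ (a / (a - lam))))
    have hk1 : (1:ℝ) ≤ (k:ℝ) := le_trans (le_max_left _ _) hk
    have hk1' : 1 ≤ k := by exact_mod_cast hk1
    have hk0 : (0:ℝ) < (k:ℝ) := lt_of_lt_of_le one_pos hk1
    set x : ℝ := 1 + 2 * M * k with hx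
    have hx1 : (1:ℝ) ≤ x := by nlinarith
    have hxpos : (0:ℝ) < x := lt_of_lt_of_le one_pos hx1
    set s : ℝ := Real.log x / a with hs
    have hs0 : 0 ≤ s := div_nonneg (Real.log_nonneg hx1) ha.le
    have has : a * s = Real.log x := by rw [hs]; field_simp
    have hdx : Real.exp (-a * s) = x⁻¹ := by
      rw [neg_mul, has, Real.exp_neg, Real.exp_log hxpos]
    have hes : Real.exp (-lam * s) = x ^ (-(lam / a)) := by
      rw [Real.rpow_def_of_pos hxpos]
      congr 1
      rw [hs]; ring
    have hq := hqasym k hk1' s hs0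
    have hqlow : C * k * Real.exp (-lam * s) * (1 - M * k * Real.exp (-a * s)) ≤ q k s := by
      have h1 := (abs_le.mp hq).1
      nlinarith [h1]
    have hhalf : M * (k:ℝ) * Real.exp (-a * s) ≤ 1/2 := by
      rw [hdx, ← div_eq_mul_inv, div_le_iff₀ hxpos]
      rw [hx]; nlinarith
    have hq1 : q k s < 1 := (hq01 k hk1' s hs0).2
    have hepos : (0:ℝ) < Real.exp (-lam * s) := Real.exp_pos _
    have hkey : C * k * Real.exp (-lam * s) * (1/2) < 1 := by
      have hCk : (0:ℝ) < C * k * Real.exp (-lam * s) := by positivity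
      nlinarith [hqlow, hq1, hhalf, hCk]
    rw [hes] at hkey
    have hx2 : (0:ℝ) < x ^ (lam / a) := Real.rpow_pos_of_pos hxpos _
    have h2 : C * k < 2 * x ^ (lam / a) := by
      rw [Real.rpow_neg hxpos.le, ← div_eq_mul_inv] at hkey
      have := (div_lt_iff₀ hx2).mp (by nlinarith [hkey] : C * k / x ^ (lam / a) < 2)
      linarith
    have hxk : x ≤ (1 + 2 * M) * k := by rw [hx]; nlinarith
    have hxp : x ^ (lam / a) ≤ ((1 + 2 * M) * k) ^ (lam / a) :=
      Real.rpow_le_rpow hxpos.le hxk (by positivity)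
    have hmulr : ((1 + 2 * M) * k) ^ (lam / a) =
        (1 + 2 * M) ^ (lam / a) * (k:ℝ) ^ (lam / a) :=
      Real.mul_rpow h12M.le hk0.le
    have hkp : (0:ℝ) < (k:ℝ) ^ (lam / a) := Real.rpow_pos_of_pos hk0 _
    have h3 : C * k < 2 * ((1 + 2 * M) ^ (lam / a) * (k:ℝ) ^ (lam / a)) := by
      calc C * k < 2 * x ^ (lam / a) := h2
      _ ≤ 2 * ((1 + 2 * M) * k) ^ (lam / a) := by linarith [hxp]
      _ = 2 * ((1 + 2 * M) ^ (lam / a) * (k:ℝ) ^ (lam / a)) := by rw [hmulr]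
    have hsplit : (k:ℝ) = (k:ℝ) ^ ((1:ℝ) - lam / a) * (k:ℝ) ^ (lam / a) := by
      rw [← Real.rpow_add hk0]
      norm_num
    have h4 : (k:ℝ) ^ ((1:ℝ) - lam / a) < B := by
      rw [hsplit] at h3
      rw [hB]
      rw [div_mul_eq_mul_div, lt_div_iff₀ hC0]
      nlinarith [h3, hkp, hC0, Real.rpow_pos_of_pos h12M (lam/a)]
    have h5 : B ≤ (k:ℝ) ^ ((1:ℝ) - lam / a) := by
      have hBk : B ^ (a / (a - lam)) ≤ (k:ℝ) := le_trans (le_max_right _ _) hk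
      have hexp : (0:ℝ) ≤ 1 - lam / a := by
        rw [sub_nonneg, div_le_one ha]; linarith
      have h6 : (B ^ (a / (a - lam))) ^ ((1:ℝ) - lam / a) ≤ (k:ℝ) ^ ((1:ℝ) - lam / a) :=
        Real.rpow_le_rpow (by positivity) hBk hexp
      have h7 : (B ^ (a / (a - lam))) ^ ((1:ℝ) - lam / a) = B := by
        rw [← Real.rpow_mul hBpos.le]
        have : a / (a - lam) * (1 - lam / a) = 1 := by
          have hne : a - lam ≠ 0 := sub_ne_zero.mpr (ne_of_gt hal)
          field_simp
        rw [this, Real.rpow_one]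
      linarith [h6, h7 ▸ h6]
    exact absurd h4 (not_lt.mpr h5)
end
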